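/- Let n ≥ 0 and let v₁, …, v_{2n+1}, w ∈ A be nonzero elements with v_k⁴ ∈ F·1 for all k and w⁴ ∈ F·1, satisfying v_k·v_j = i·v_j·v_k for all 1 ≤ k < j ≤ 2n+1. Suppose there is an odd integer r with 1 ≤ r ≤ 2n+1 such that v_k·w = i·w·v_k for all k < r, v_r·w = −w·v_r, and w·v_k = i·v_k·w for all k > r. Then there exist nonzero elements μ₁, η₁, …, μ_{n+1}, η_{n+1} ∈ A such that: the F-subalgebra of A generated by {v₁, …, v_{2n+1}, w} equals the F-subalgebra generated by {μ₁, η₁, …, μ_{n+1}, η_{n+1}}; μ_j·η_j = i·η_j·μ_j for 1 ≤ j ≤ n; μ_{n+1}·η_{n+1} = −η_{n+1}·μ_{n+1}; any two elements of {μ₁, η₁, …, μ_{n+1}, η_{n+1}} other than a pair μ_j, η_j with the same index commute; and μ_j⁴ ∈ F·1 and η_j⁴ ∈ F·1 for all 1 ≤ j ≤ n+1. -/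

import Mathlib

section helpers
variable {F A : Type*} [Field F] [DivisionRing A] [Algebra F A]

/-- `x * y = i ^ c • (y * x)` : graded commutation relation. -/
def KRel (i : F) (c : ℤ) (x y : A) : Prop := x * y = (i ^ c) • (y * x)

variable {i : F}

theorem i_ne_zero (hi : i ^ 2 = -1) : i ≠ 0 := by
  intro h; rw [h] at hi; norm_num at hi

theorem i_zpow_four (hi : i ^ 2 = -1) : i ^ (4:ℤ) = 1 := by
  rw [show (4:ℤ) = ((4:ℕ):ℤ) by norm_num, zpow_natCast, show (4:ℕ) = 2*2 from rfl,
    pow_mul, hi, neg_one_sq]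

theorem i_zpow_mod (hi : i ^ 2 = -1) (c : ℤ) : i ^ c = i ^ (c % 4) := by
  have h0 := i_ne_zero hi
  conv_lhs => rw [← Int.emod_add_mul_ediv c 4]
  rw [zpow_add₀ h0, zpow_mul, i_zpow_four hi, one_zpow, mul_one]

theorem KRel.of_commute {x y : A} (h : Commute x y) : KRel i 0 x y := by
  simp [KRel, h.eq]

theorem KRel.of_eq {a b : ℤ} (h : a = b) {x y : A} (hr : KRel i a x y) : KRel i b x y := h ▸ hr

theorem KRel.cast (hi : i ^ 2 = -1) {a b : ℤ} (h : a % 4 = b % 4) {x y : A} (hr : KRel i a x y) :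
    KRel i b x y := by
  unfold KRel at *
  rw [i_zpow_mod hi b, ← h, ← i_zpow_mod hi a]; exact hr

theorem KRel.symm (hi : i ^ 2 = -1) {a : ℤ} {x y : A} (h : KRel i a x y) : KRel i (-a) y x := by
  have h0 := i_ne_zero hi
  unfold KRel at *
  rw [h, smul_smul, ← zpow_add₀ h0]
  norm_num

theorem KRel.mul_left (hi : i ^ 2 = -1) {a b : ℤ} {x y z : A}
    (hx : KRel i a x z) (hy : KRel i b y z) : KRel i (a + b) (x * y) z := by
  have h0 := i_ne_zero hi
  unfold KRel at *
  rw [mul_assoc, hy, mul_smul_comm, ← mul_assoc, hx, smul_mul_assoc, smul_smul,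
    ← zpow_add₀ h0, add_comm b a, mul_assoc]

theorem KRel.mul_right (hi : i ^ 2 = -1) {a b : ℤ} {x y z : A}
    (hy : KRel i a x y) (hz : KRel i b x z) : KRel i (a + b) x (y * z) := by
  have h0 := i_ne_zero hi
  unfold KRel at *
  rw [← mul_assoc, hy, smul_mul_assoc, mul_assoc, hz, mul_smul_comm, smul_smul,
    ← zpow_add₀ h0, mul_assoc]

theorem KRel.pow_left (hi : i ^ 2 = -1) {a : ℤ} {x y : A} (h : KRel i a x y) (m : ℕ) :
    KRel i (m * a) (x ^ m) y := by
  induction m with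
  | zero => simpa using KRel.of_commute (Commute.one_left y)
  | succ k ihk =>
      rw [pow_succ]
      exact (ihk.mul_left hi h).of_eq (by push_cast; ring)

theorem KRel.pow_right (hi : i ^ 2 = -1) {a : ℤ} {x y : A} (h : KRel i a x y) (m : ℕ) :
    KRel i (m * a) x (y ^ m) := by
  induction m with
  | zero => simpa using KRel.of_commute (Commute.one_right x)
  | succ k ihk =>
      rw [pow_succ]
      exact (ihk.mul_right hi h).of_eq (by push_cast; ring)

theorem KRel.commute (hi : i ^ 2 = -1) {a : ℤ} {x y : A} (h : KRel i a x y) (ha : a % 4 = 0) :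
    Commute x y := by
  have := h.cast hi (b := 0) (by omega)
  unfold KRel at this
  have h2 : x * y = y * x := by simpa using this
  exact h2

theorem krel_one_iff {x y : A} : KRel i 1 x y ↔ x * y = i • (y * x) := by
  rw [KRel, zpow_one]

theorem krel_two_iff (hi : i ^ 2 = -1) {x y : A} : KRel i 2 x y ↔ x * y = -(y * x) := by
  rw [KRel, show (2:ℤ) = ((2:ℕ):ℤ) by norm_num, zpow_natCast, hi, neg_one_smul]


/-- Master composition lemma for products of shape `u1^a * u2^b * x`. -/
theorem krelTT (hi : i ^ 2 = -1) {u1 u2 x y : A} {c1 c2 d1 d2 e : ℤ}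
    (h12 : KRel i 1 u1 u2)
    (hc1 : KRel i c1 u1 x) (hc2 : KRel i c2 u2 x)
    (hd1 : KRel i d1 u1 y) (hd2 : KRel i d2 u2 y)
    (he : KRel i e x y) (a b a' b' : ℕ) {t : ℤ}
    (ht : ((a:ℤ) * b' - (b:ℤ) * a' + (a:ℤ) * d1 + (b:ℤ) * d2 - (a':ℤ) * c1 - (b':ℤ) * c2 + e) % 4
      = t % 4) :
    KRel i t (u1 ^ a * u2 ^ b * x) (u1 ^ a' * u2 ^ b' * y) := by
  -- KRel of the big product vs u1 ^ a'
  have h11 : KRel i 0 u1 u1 := KRel.of_commute rfl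
  have h22 : KRel i 0 u2 u2 := KRel.of_commute rfl
  have h21 : KRel i (-1) u2 u1 := h12.symm hi
  have hx1 : KRel i (-c1) x u1 := hc1.symm hi
  have hx2 : KRel i (-c2) x u2 := hc2.symm hi
  have R1 : KRel i ((a:ℤ) * 0 + (b:ℤ) * (-1) + -c1) (u1 ^ a * u2 ^ b * x) u1 :=
    ((h11.pow_left hi a).mul_left hi (h21.pow_left hi b)).mul_left hi hx1
  have R2 : KRel i ((a:ℤ) * 1 + (b:ℤ) * 0 + -c2) (u1 ^ a * u2 ^ b * x) u2 :=
    ((h12.pow_left hi a).mul_left hi (h22.pow_left hi b)).mul_left hi hx2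
  have R3 : KRel i ((a:ℤ) * d1 + (b:ℤ) * d2 + e) (u1 ^ a * u2 ^ b * x) y :=
    ((hd1.pow_left hi a).mul_left hi (hd2.pow_left hi b)).mul_left hi he
  have R : KRel i ((a':ℤ) * ((a:ℤ) * 0 + (b:ℤ) * (-1) + -c1)
      + (b':ℤ) * ((a:ℤ) * 1 + (b:ℤ) * 0 + -c2)
      + ((a:ℤ) * d1 + (b:ℤ) * d2 + e)) (u1 ^ a * u2 ^ b * x) (u1 ^ a' * u2 ^ b' * y) :=
    ((R1.pow_right hi a').mul_right hi (R2.pow_right hi b')).mul_right hi R3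
  exact R.cast hi (by rw [← ht]; ring_nf)

theorem mem_range_mul {x y : A} (hx : x ∈ Set.range (algebraMap F A))
    (hy : y ∈ Set.range (algebraMap F A)) : x * y ∈ Set.range (algebraMap F A) := by
  obtain ⟨c, rfl⟩ := hx; obtain ⟨d, rfl⟩ := hy
  exact ⟨c * d, map_mul _ _ _⟩

theorem mem_range_smul (s : F) {x : A} (hx : x ∈ Set.range (algebraMap F A)) :
    s • x ∈ Set.range (algebraMap F A) := by
  obtain ⟨c, rfl⟩ := hx
  exact ⟨s * c, by rw [map_mul, Algebra.smul_def]⟩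

theorem mem_range_pow {x : A} (m : ℕ) (hx : x ∈ Set.range (algebraMap F A)) :
    x ^ m ∈ Set.range (algebraMap F A) := by
  obtain ⟨c, rfl⟩ := hx
  exact ⟨c ^ m, map_pow _ _ _⟩

theorem KRel.sq (hi : i ^ 2 = -1) {a : ℤ} {x y : A} (h : KRel i a x y) :
    (x * y) ^ 2 = (i ^ (-a)) • (x ^ 2 * y ^ 2) := by
  have h' : y * x = (i ^ (-a)) • (x * y) := h.symm hi
  calc (x * y) ^ 2 = x * (y * x) * y := by rw [pow_two]; noncomm_ring
    _ = (i ^ (-a)) • (x * x * (y * y)) := by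
        rw [h']; simp only [mul_smul_comm, smul_mul_assoc]; congr 1; noncomm_ring
    _ = (i ^ (-a)) • (x ^ 2 * y ^ 2) := by rw [pow_two, pow_two]

theorem KRel.pow4_mem (hi : i ^ 2 = -1) {a : ℤ} {x y : A} (h : KRel i a x y)
    (hx : x ^ 4 ∈ Set.range (algebraMap F A)) (hy : y ^ 4 ∈ Set.range (algebraMap F A)) :
    (x * y) ^ 4 ∈ Set.range (algebraMap F A) := by
  have h2 : KRel i ((2:ℕ) * ((2:ℕ) * a)) (x ^ 2) (y ^ 2) := (h.pow_right hi 2).pow_left hi 2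
  have e1 : (x * y) ^ 4 = ((x * y) ^ 2) ^ 2 := by rw [← pow_mul]
  rw [e1, h.sq hi, smul_pow, h2.sq hi, smul_smul]
  have hx2 : (x ^ 2) ^ 2 = x ^ 4 := by rw [← pow_mul]
  have hy2 : (y ^ 2) ^ 2 = y ^ 4 := by rw [← pow_mul]
  rw [hx2, hy2]
  exact mem_range_smul _ (mem_range_mul hx hy)

theorem pow4T (hi : i ^ 2 = -1) {u1 u2 x : A} {c1 c2 : ℤ}
    (h12 : KRel i 1 u1 u2) (hc1 : KRel i c1 u1 x) (hc2 : KRel i c2 u2 x)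
    (h1 : u1 ^ 4 ∈ Set.range (algebraMap F A)) (h2 : u2 ^ 4 ∈ Set.range (algebraMap F A))
    (hx : x ^ 4 ∈ Set.range (algebraMap F A)) (a b : ℕ) :
    (u1 ^ a * u2 ^ b * x) ^ 4 ∈ Set.range (algebraMap F A) := by
  have hp1 : (u1 ^ a) ^ 4 ∈ Set.range (algebraMap F A) := by
    rw [← pow_mul, mul_comm, pow_mul]; exact mem_range_pow a h1
  have hp2 : (u2 ^ b) ^ 4 ∈ Set.range (algebraMap F A) := by
    rw [← pow_mul, mul_comm, pow_mul]; exact mem_range_pow b h2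
  have hAB : KRel i ((b:ℕ) * ((a:ℕ) * 1)) (u1 ^ a) (u2 ^ b) :=
    (h12.pow_left hi a).pow_right hi b
  have hAx : KRel i ((a:ℤ) * c1) (u1 ^ a) x := hc1.pow_left hi a
  have hBx : KRel i ((b:ℤ) * c2) (u2 ^ b) x := hc2.pow_left hi b
  exact (hAx.mul_left hi hBx).pow4_mem hi (hAB.pow4_mem hi hp1 hp2) hx

/-- Rearrangement for recovering generators. -/
theorem Tmul (hi : i ^ 2 = -1) {u1 u2 : A} (h12 : KRel i 1 u1 u2) (a b a' b' : ℕ) (x : A) :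
    u1 ^ a * u2 ^ b * (u1 ^ a' * u2 ^ b' * x)
      = (i ^ (-((b:ℤ) * a'))) • (u1 ^ (a + a') * u2 ^ (b + b') * x) := by
  have h : u2 ^ b * u1 ^ a' = (i ^ (-((b:ℤ) * a'))) • (u1 ^ a' * u2 ^ b) := by
    have := ((h12.symm hi).pow_left hi b).pow_right hi a'
    have h2 := this.cast hi (a := (a':ℤ) * ((b:ℤ) * (-1))) (b := -((b:ℤ) * a')) (by ring_nf)
    exact h2
  calc u1 ^ a * u2 ^ b * (u1 ^ a' * u2 ^ b' * x)
      = u1 ^ a * ((u2 ^ b * u1 ^ a') * (u2 ^ b' * x)) := by noncomm_ring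
    _ = (i ^ (-((b:ℤ) * a'))) • (u1 ^ a * (u1 ^ a' * (u2 ^ b * (u2 ^ b' * x)))) := by
        rw [h]; simp only [smul_mul_assoc, mul_smul_comm]; congr 1; noncomm_ring
    _ = (i ^ (-((b:ℤ) * a'))) • (u1 ^ (a + a') * u2 ^ (b + b') * x) := by
        congr 1; simp only [pow_add]; noncomm_ring

end helpers
section main
variable {F A : Type*} [Field F] [DivisionRing A] [Algebra F A]

def Pat (i : F) (n : ℕ) (v : ℕ → A) (w : A) : Prop :=
  (∃ r, 1 ≤ r ∧ r ≤ 2*n+1 ∧ Odd r ∧ (∀ k, 1 ≤ k → k < r → KRel i 1 (v k) w) ∧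
     KRel i 2 (v r) w ∧ (∀ k, r < k → k ≤ 2*n+1 → KRel i 3 (v k) w)) ∨
  (∀ k, 1 ≤ k → k ≤ 2*n+1 → KRel i 2 (v k) w)

def Concl (i : F) (n : ℕ) (v : ℕ → A) (w : A) : Prop :=
  ∃ μ η : ℕ → A,
    (∀ j, 1 ≤ j → j ≤ n + 1 → μ j ≠ 0 ∧ η j ≠ 0) ∧
    Algebra.adjoin F ((v '' Set.Icc 1 (2 * n + 1)) ∪ {w}) =
      Algebra.adjoin F ((μ '' Set.Icc 1 (n + 1)) ∪ (η '' Set.Icc 1 (n + 1))) ∧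
    (∀ j, 1 ≤ j → j ≤ n → μ j * η j = i • (η j * μ j)) ∧
    (μ (n + 1) * η (n + 1) = -(η (n + 1) * μ (n + 1))) ∧
    (∀ j k, 1 ≤ j → j ≤ n + 1 → 1 ≤ k → k ≤ n + 1 → j ≠ k →
      Commute (μ j) (μ k) ∧ Commute (μ j) (η k) ∧ Commute (η j) (η k)) ∧
    (∀ j, 1 ≤ j → j ≤ n + 1 →
      (μ j) ^ 4 ∈ Set.range (algebraMap F A) ∧ (η j) ^ 4 ∈ Set.range (algebraMap F A))

theorem assemble {i : F} (hi : i ^ 2 = -1) (n : ℕ) (v : ℕ → A) (w w' : A)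
    (hv0 : ∀ k, 1 ≤ k → k ≤ 2*n+3 → v k ≠ 0)
    (hv4 : ∀ k, 1 ≤ k → k ≤ 2*n+3 → (v k)^4 ∈ Set.range (algebraMap F A))
    (hvv : ∀ k j, 1 ≤ k → k < j → j ≤ 2*n+3 → KRel i 1 (v k) (v j))
    (hw'0 : w' ≠ 0) (hw'4 : w'^4 ∈ Set.range (algebraMap F A))
    (hw'c1 : Commute (v 1) w') (hw'c2 : Commute (v 2) w')
    (hw'mem : w' ∈ Algebra.adjoin F ((v '' Set.Icc 1 (2*n+3)) ∪ {w}))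
    (hwmem : w ∈ Algebra.adjoin F ({v 1, v 2, w'} : Set A))
    (hPat : Pat i n (fun j => v 1 ^ 1 * v 2 ^ 3 * v (j+2)) w')
    (ih : ∀ (v : ℕ → A) (w : A),
      (∀ k, 1 ≤ k → k ≤ 2*n+1 → v k ≠ 0) → w ≠ 0 →
      (∀ k, 1 ≤ k → k ≤ 2*n+1 → (v k)^4 ∈ Set.range (algebraMap F A)) →
      w^4 ∈ Set.range (algebraMap F A) →
      (∀ k j, 1 ≤ k → k < j → j ≤ 2*n+1 → KRel i 1 (v k) (v j)) →
      Pat i n v w → Concl i n v w) :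
    Concl i (n+1) v w := by
  have hi0 := i_ne_zero hi
  have h12 : KRel i 1 (v 1) (v 2) := hvv 1 2 le_rfl one_lt_two (by omega)
  set v' : ℕ → A := fun j => v 1 ^ 1 * v 2 ^ 3 * v (j+2) with hv'def
  have hv'app : ∀ j, v' j = v 1 ^ 1 * v 2 ^ 3 * v (j+2) := fun j => rfl
  have hv'0 : ∀ k, 1 ≤ k → k ≤ 2*n+1 → v' k ≠ 0 := by
    intro k h1 h2
    exact mul_ne_zero (mul_ne_zero (pow_ne_zero _ (hv0 1 le_rfl (by omega)))
      (pow_ne_zero _ (hv0 2 (by omega) (by omega)))) (hv0 (k+2) (by omega) (by omega))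
  have hv'4 : ∀ k, 1 ≤ k → k ≤ 2*n+1 → (v' k)^4 ∈ Set.range (algebraMap F A) := by
    intro k h1 h2
    exact pow4T hi h12 (hvv 1 (k+2) le_rfl (by omega) (by omega))
      (hvv 2 (k+2) (by omega) (by omega) (by omega))
      (hv4 1 le_rfl (by omega)) (hv4 2 (by omega) (by omega))
      (hv4 (k+2) (by omega) (by omega)) 1 3
  have hv'rel : ∀ k j, 1 ≤ k → k < j → j ≤ 2*n+1 → KRel i 1 (v' k) (v' j) := by
    intro k j h1 h2 h3
    exact krelTT hi h12 (hvv 1 (k+2) le_rfl (by omega) (by omega))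
      (hvv 2 (k+2) (by omega) (by omega) (by omega))
      (hvv 1 (j+2) le_rfl (by omega) (by omega))
      (hvv 2 (j+2) (by omega) (by omega) (by omega))
      (hvv (k+2) (j+2) (by omega) (by omega) (by omega)) 1 3 1 3 (by norm_num)
  obtain ⟨μ', η', hne', hadj', hμη', hq', hcomm', h4'⟩ :=
    ih v' w' hv'0 hw'0 hv'4 hw'4 hv'rel hPat
  -- scalars
  obtain ⟨c1, hc1⟩ := hv4 1 le_rfl (by omega)
  obtain ⟨c2, hc2⟩ := hv4 2 (by omega) (by omega)
  have hc1ne : c1 ≠ 0 := by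
    intro h; rw [h, map_zero] at hc1
    exact pow_ne_zero 4 (hv0 1 le_rfl (by omega)) hc1.symm
  have hc2ne : c2 ≠ 0 := by
    intro h; rw [h, map_zero] at hc2
    exact pow_ne_zero 4 (hv0 2 (by omega) (by omega)) hc2.symm
  set X : Set A := (v' '' Set.Icc 1 (2*n+1)) ∪ {w'} with hXdef
  set Y : Set A := ({v 1, v 2} : Set A) ∪ X with hYdef
  have hv1Y : v 1 ∈ Y := by simp [hYdef]
  have hv2Y : v 2 ∈ Y := by simp [hYdef]
  have hw'Y : w' ∈ Y := by simp [hYdef, hXdef]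
  have hrec : ∀ k, 3 ≤ k → k ≤ 2*n+3 → v k ∈ Algebra.adjoin F Y := by
    intro k hk3 hk
    have hx : v' (k-2) ∈ Algebra.adjoin F Y := by
      apply Algebra.subset_adjoin
      refine Or.inr (Or.inl ⟨k-2, Set.mem_Icc.mpr ⟨by omega, by omega⟩, rfl⟩)
    have ht := Tmul hi h12 3 1 1 3 (v (k-2+2))
    rw [show k-2+2 = k by omega] at ht
    simp only [pow_one, Nat.reduceAdd, Nat.cast_one, mul_one] at ht
    have heq : v 1 ^ 3 * v 2 * v' (k-2) = (i ^ (-(1:ℤ)) * (c1 * c2)) • v k := by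
      rw [hv'app, show k-2+2 = k by omega]
      simp only [pow_one]
      rw [ht, ← hc1, ← hc2]
      rw [mul_assoc, ← Algebra.smul_def, ← Algebra.smul_def, smul_smul, smul_smul, mul_assoc]
    have hs : i ^ (-(1:ℤ)) * (c1 * c2) ≠ 0 :=
      mul_ne_zero (zpow_ne_zero _ hi0) (mul_ne_zero hc1ne hc2ne)
    have hvk : v k = (i ^ (-(1:ℤ)) * (c1 * c2))⁻¹ • (v 1 ^ 3 * v 2 * v' (k-2)) := by
      rw [heq, inv_smul_smul₀ hs]
    rw [hvk]
    exact Subalgebra.smul_mem _ (mul_mem (mul_mem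
      (pow_mem (Algebra.subset_adjoin hv1Y) 3) (Algebra.subset_adjoin hv2Y)) hx) _
  have hE1 : Algebra.adjoin F ((v '' Set.Icc 1 (2*n+3)) ∪ {w}) = Algebra.adjoin F Y := by
    apply le_antisymm
    · apply Algebra.adjoin_le
      rintro x (⟨k, hk, rfl⟩ | rfl)
      · simp only [SetLike.mem_coe]
        obtain ⟨hk1, hk2⟩ := Set.mem_Icc.mp hk
        rcases Nat.lt_or_ge k 3 with h3 | h3
        · interval_cases k
          · exact Algebra.subset_adjoin hv1Y
          · exact Algebra.subset_adjoin hv2Y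
        · exact hrec k h3 hk2
      · simp only [SetLike.mem_coe]
        refine Algebra.adjoin_mono ?_ hwmem
        intro y hy
        rcases hy with rfl | rfl | rfl
        · exact hv1Y
        · exact hv2Y
        · exact hw'Y
    · apply Algebra.adjoin_le
      rintro x (hx | ⟨j, hj, rfl⟩ | rfl)
      · simp only [SetLike.mem_coe]
        rcases hx with rfl | rfl
        · exact Algebra.subset_adjoin (Or.inl ⟨1, Set.mem_Icc.mpr ⟨le_rfl, by omega⟩, rfl⟩)
        · exact Algebra.subset_adjoin (Or.inl ⟨2, Set.mem_Icc.mpr ⟨by omega, by omega⟩, rfl⟩)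
      · simp only [SetLike.mem_coe]
        rw [Set.mem_Icc] at hj
        rw [hv'app]
        have h1m : v 1 ∈ Algebra.adjoin F ((v '' Set.Icc 1 (2*n+3)) ∪ {w}) :=
          Algebra.subset_adjoin (Or.inl ⟨1, Set.mem_Icc.mpr ⟨le_rfl, by omega⟩, rfl⟩)
        have h2m : v 2 ∈ Algebra.adjoin F ((v '' Set.Icc 1 (2*n+3)) ∪ {w}) :=
          Algebra.subset_adjoin (Or.inl ⟨2, Set.mem_Icc.mpr ⟨by omega, by omega⟩, rfl⟩)
        have h3m : v (j+2) ∈ Algebra.adjoin F ((v '' Set.Icc 1 (2*n+3)) ∪ {w}) :=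
          Algebra.subset_adjoin (Or.inl ⟨j+2, Set.mem_Icc.mpr ⟨by omega, by omega⟩, rfl⟩)
        exact mul_mem (mul_mem (pow_mem h1m 1) (pow_mem h2m 3)) h3m
      · exact hw'mem
  -- commuting of v 1, v 2 with everything in adjoin X
  have hone : KRel i 0 (1 : A) (1 : A) := KRel.of_commute (Commute.one_right 1)
  have hcomm1 : ∀ j, 1 ≤ j → j ≤ 2*n+1 → Commute (v 1) (v' j) := by
    intro j h1 h2
    have h := (krelTT hi h12 (KRel.of_commute (Commute.one_right _))
      (KRel.of_commute (Commute.one_right _))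
      (hvv 1 (j+2) le_rfl (by omega) (by omega))
      (hvv 2 (j+2) (by omega) (by omega) (by omega))
      (KRel.of_commute (Commute.one_left _)) 1 0 1 3 (t := 0)
      (by norm_num)).commute hi (by norm_num)
    simp only [hv'app]
    simpa using h
  have hcomm2 : ∀ j, 1 ≤ j → j ≤ 2*n+1 → Commute (v 2) (v' j) := by
    intro j h1 h2
    have h := (krelTT hi h12 (KRel.of_commute (Commute.one_right _))
      (KRel.of_commute (Commute.one_right _))
      (hvv 1 (j+2) le_rfl (by omega) (by omega))
      (hvv 2 (j+2) (by omega) (by omega) (by omega))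
      (KRel.of_commute (Commute.one_left _)) 0 1 1 3 (t := 0)
      (by norm_num)).commute hi (by norm_num)
    simp only [hv'app]
    simpa using h
  have hC : ∀ u : A, (∀ j, 1 ≤ j → j ≤ 2*n+1 → Commute u (v' j)) → Commute u w' →
      ∀ x ∈ Algebra.adjoin F X, Commute u x := by
    intro u hu huw x hx
    have hle : Algebra.adjoin F X ≤ Subalgebra.centralizer F {u} := by
      apply Algebra.adjoin_le
      rintro y (⟨j, hj, rfl⟩ | rfl)
      · rw [Set.mem_Icc] at hj
        rw [SetLike.mem_coe, Subalgebra.mem_centralizer_iff]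
        rintro g rfl
        exact (hu j hj.1 hj.2).eq
      · rw [SetLike.mem_coe, Subalgebra.mem_centralizer_iff]
        rintro g rfl
        exact huw.eq
    exact (Subalgebra.mem_centralizer_iff F).mp (hle hx) u rfl
  have hμ'mem : ∀ t, 1 ≤ t → t ≤ n+1 → μ' t ∈ Algebra.adjoin F X := by
    intro t h1 h2
    rw [hadj']
    exact Algebra.subset_adjoin (Or.inl ⟨t, Set.mem_Icc.mpr ⟨h1, h2⟩, rfl⟩)
  have hη'mem : ∀ t, 1 ≤ t → t ≤ n+1 → η' t ∈ Algebra.adjoin F X := by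
    intro t h1 h2
    rw [hadj']
    exact Algebra.subset_adjoin (Or.inr ⟨t, Set.mem_Icc.mpr ⟨h1, h2⟩, rfl⟩)
  have hC1μ : ∀ t, 1 ≤ t → t ≤ n+1 → Commute (v 1) (μ' t) :=
    fun t h1 h2 => hC (v 1) hcomm1 hw'c1 _ (hμ'mem t h1 h2)
  have hC1η : ∀ t, 1 ≤ t → t ≤ n+1 → Commute (v 1) (η' t) :=
    fun t h1 h2 => hC (v 1) hcomm1 hw'c1 _ (hη'mem t h1 h2)
  have hC2μ : ∀ t, 1 ≤ t → t ≤ n+1 → Commute (v 2) (μ' t) :=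
    fun t h1 h2 => hC (v 2) hcomm2 hw'c2 _ (hμ'mem t h1 h2)
  have hC2η : ∀ t, 1 ≤ t → t ≤ n+1 → Commute (v 2) (η' t) :=
    fun t h1 h2 => hC (v 2) hcomm2 hw'c2 _ (hη'mem t h1 h2)
  -- the new families
  refine ⟨(fun j => if j = 1 then v 1 else μ' (j-1)), (fun j => if j = 1 then v 2 else η' (j-1)),
    ?_, ?_, ?_, ?_, ?_, ?_⟩
  · intro j hj1 hj2
    by_cases h : j = 1
    · subst h
      simp only [if_pos rfl]
      exact ⟨hv0 1 le_rfl (by omega), hv0 2 (by omega) (by omega)⟩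
    · simp only [if_neg h]
      exact hne' (j-1) (by omega) (by omega)
  · -- adjoin equality
    have key : ∀ (z : A) (f : ℕ → A),
        ((fun j => if j = 1 then z else f (j-1)) '' Set.Icc 1 (n+1+1))
          = insert z (f '' Set.Icc 1 (n+1)) := by
      intro z f
      ext x
      simp only [Set.mem_image, Set.mem_Icc, Set.mem_insert_iff]
      constructor
      · rintro ⟨j, ⟨hj1, hj2⟩, rfl⟩
        by_cases h : j = 1
        · subst h; simp
        · right
          refine ⟨j-1, ⟨by omega, by omega⟩, ?_⟩
          simp [h]
      · rintro (rfl | ⟨t, ⟨ht1, ht2⟩, rfl⟩)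
        · exact ⟨1, ⟨le_rfl, by omega⟩, by simp⟩
        · exact ⟨t+1, ⟨by omega, by omega⟩, by simp [show ¬(t+1 = 1) by omega, show t ≠ 0 by omega]⟩
    rw [key, key]
    have hIcc : Set.Icc 1 (2*(n+1)+1) = Set.Icc 1 (2*n+3) := by ring_nf
    rw [hIcc, hE1, hYdef, Algebra.adjoin_union, hadj', ← Algebra.adjoin_union]
    congr 1
    ext x
    simp only [Set.mem_union, Set.mem_insert_iff, Set.mem_singleton_iff]
    tauto
  · -- i-commuting pairs
    intro j hj1 hj2
    by_cases h : j = 1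
    · subst h
      simp only [if_pos rfl]
      exact krel_one_iff.mp h12
    · simp only [if_neg h]
      exact hμη' (j-1) (by omega) (by omega)
  · -- quaternion pair
    simp only [show ¬(n+1+1 = 1) by omega, if_neg, if_false]
    have : n+1+1-1 = n+1 := by omega
    rw [this]
    exact hq'
  · -- commuting
    intro j k hj1 hj2 hk1 hk2 hjk
    by_cases hj : j = 1
    · subst hj
      have hk' : ¬(k = 1) := by omega
      simp only [if_pos rfl, if_neg hk']
      exact ⟨hC1μ (k-1) (by omega) (by omega), hC1η (k-1) (by omega) (by omega),
        hC2η (k-1) (by omega) (by omega)⟩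
    · by_cases hk : k = 1
      · subst hk
        simp only [if_pos rfl, if_neg hj]
        exact ⟨(hC1μ (j-1) (by omega) (by omega)).symm,
          (hC2μ (j-1) (by omega) (by omega)).symm,
          (hC2η (j-1) (by omega) (by omega)).symm⟩
      · simp only [if_neg hj, if_neg hk]
        exact hcomm' (j-1) (k-1) (by omega) (by omega) (by omega) (by omega) (by omega)
  · -- fourth powers
    intro j hj1 hj2
    by_cases h : j = 1
    · subst h
      simp only [if_pos rfl]
      exact ⟨hv4 1 le_rfl (by omega), hv4 2 (by omega) (by omega)⟩
    · simp only [if_neg h]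
      exact h4' (j-1) (by omega) (by omega)

end main

section final
variable {F A : Type*} [Field F] [DivisionRing A] [Algebra F A]

theorem recover {i : F} (hi : i ^ 2 = -1) {u1 u2 x : A} (h12 : KRel i 1 u1 u2) {c1 c2 : F}
    (hc1 : algebraMap F A c1 = u1 ^ 4) (hc2 : algebraMap F A c2 = u2 ^ 4)
    (hc1ne : c1 ≠ 0) (hc2ne : c2 ≠ 0) (a b a' b' : ℕ) (ha : a + a' = 4) (hb : b + b' = 4) :
    x ∈ Algebra.adjoin F ({u1, u2, u1 ^ a' * u2 ^ b' * x} : Set A) := by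
  have ht := Tmul hi h12 a b a' b' x
  rw [ha, hb, ← hc1, ← hc2] at ht
  have hmm : (algebraMap F A c1) * (algebraMap F A c2) * x = (c1 * c2) • x := by
    rw [← map_mul, Algebra.smul_def]
  rw [hmm, smul_smul] at ht
  have hs : i ^ (-((b:ℤ) * a')) * (c1 * c2) ≠ 0 :=
    mul_ne_zero (zpow_ne_zero _ (i_ne_zero hi)) (mul_ne_zero hc1ne hc2ne)
  have hx : x = (i ^ (-((b:ℤ) * a')) * (c1 * c2))⁻¹ •
      (u1 ^ a * u2 ^ b * (u1 ^ a' * u2 ^ b' * x)) := by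
    rw [ht, inv_smul_smul₀ hs]
  have h1m : u1 ∈ Algebra.adjoin F ({u1, u2, u1 ^ a' * u2 ^ b' * x} : Set A) :=
    Algebra.subset_adjoin (by simp)
  have h2m : u2 ∈ Algebra.adjoin F ({u1, u2, u1 ^ a' * u2 ^ b' * x} : Set A) :=
    Algebra.subset_adjoin (by simp)
  have h3m : u1 ^ a' * u2 ^ b' * x ∈ Algebra.adjoin F ({u1, u2, u1 ^ a' * u2 ^ b' * x} : Set A) :=
    Algebra.subset_adjoin (by simp)
  have hmem2 : (i ^ (-((b:ℤ) * a')) * (c1 * c2))⁻¹ •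
      (u1 ^ a * u2 ^ b * (u1 ^ a' * u2 ^ b' * x)) ∈
      Algebra.adjoin F ({u1, u2, u1 ^ a' * u2 ^ b' * x} : Set A) :=
    Subalgebra.smul_mem _ (mul_mem (mul_mem (pow_mem h1m a) (pow_mem h2m b)) h3m) _
  rwa [← hx] at hmem2

theorem aux {F A : Type*} [Field F] [DivisionRing A] [Algebra F A]
    (i : F) (hi : i ^ 2 = -1) :
    ∀ (n : ℕ) (v : ℕ → A) (w : A),
    (∀ k, 1 ≤ k → k ≤ 2*n+1 → v k ≠ 0) → w ≠ 0 →
    (∀ k, 1 ≤ k → k ≤ 2*n+1 → (v k)^4 ∈ Set.range (algebraMap F A)) →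
    w^4 ∈ Set.range (algebraMap F A) →
    (∀ k j, 1 ≤ k → k < j → j ≤ 2*n+1 → KRel i 1 (v k) (v j)) →
    Pat i n v w → Concl i n v w := by
  intro n
  induction n with
  | zero =>
    intro v w hv0 hw0 hv4 hw4 hvv hPat
    have h2 : KRel i 2 (v 1) w := by
      rcases hPat with ⟨r, hr1, hr2, _, _, hr, _⟩ | h
      · have hr' : r = 1 := by omega
        subst hr'; exact hr
      · exact h 1 le_rfl (by omega)
    refine ⟨fun _ => v 1, fun _ => w, ?_, ?_, ?_, ?_, ?_, ?_⟩
    · intro j _ _; exact ⟨hv0 1 le_rfl (by omega), hw0⟩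
    · congr 1
      norm_num [Set.Icc_self, Set.image_singleton]
    · intro j h1 h2'; omega
    · exact (krel_two_iff hi).mp h2
    · intro j k h1 h2' h3 h4 h5; omega
    · intro j _ _; exact ⟨hv4 1 le_rfl (by omega), hw4⟩
  | succ n ih =>
    intro v w hv0 hw0 hv4 hw4 hvv hPat
    have hv0' : ∀ k, 1 ≤ k → k ≤ 2*n+3 → v k ≠ 0 := fun k h1 h2 => hv0 k h1 (by omega)
    have hv4' : ∀ k, 1 ≤ k → k ≤ 2*n+3 → (v k)^4 ∈ Set.range (algebraMap F A) :=
      fun k h1 h2 => hv4 k h1 (by omega)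
    have hvv' : ∀ k j, 1 ≤ k → k < j → j ≤ 2*n+3 → KRel i 1 (v k) (v j) :=
      fun k j h1 h2 h3 => hvv k j h1 h2 (by omega)
    have h12 : KRel i 1 (v 1) (v 2) := hvv' 1 2 le_rfl one_lt_two (by omega)
    obtain ⟨c1, hc1⟩ := hv4' 1 le_rfl (by omega)
    obtain ⟨c2, hc2⟩ := hv4' 2 (by omega) (by omega)
    have hc1ne : c1 ≠ 0 := by
      intro h; rw [h, map_zero] at hc1
      exact pow_ne_zero 4 (hv0' 1 le_rfl (by omega)) hc1.symm
    have hc2ne : c2 ≠ 0 := by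
      intro h; rw [h, map_zero] at hc2
      exact pow_ne_zero 4 (hv0' 2 (by omega) (by omega)) hc2.symm
    have e1 : (v 1 : A) ^ 1 * v 2 ^ 0 * 1 = v 1 := by simp
    have e2 : (v 1 : A) ^ 0 * v 2 ^ 1 * 1 = v 2 := by simp
    have kone : ∀ x : A, KRel i 0 (1 : A) x := fun x => KRel.of_commute (Commute.one_left x)
    have konr : ∀ x : A, KRel i 0 x (1 : A) := fun x => KRel.of_commute (Commute.one_right x)
    rcases hPat with ⟨r, hr1, hr2, hodd, hlt, hreq, hgt⟩ | hB
    · rcases (show r = 1 ∨ 3 ≤ r by rcases hodd with ⟨t, rfl⟩; omega) with hr | hr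
      · -- r = 1 : new pattern B, w' = v1^3 * v2^2 * w
        subst hr
        have d1 : KRel i 2 (v 1) w := hreq
        have d2 : KRel i 3 (v 2) w := hgt 2 (by omega) (by omega)
        apply assemble hi n v w (v 1 ^ 3 * v 2 ^ 2 * w) hv0' hv4' hvv' ?_ ?_ ?_ ?_ ?_ ?_ ?_ ih
        · exact mul_ne_zero (mul_ne_zero (pow_ne_zero _ (hv0' 1 le_rfl (by omega)))
            (pow_ne_zero _ (hv0' 2 (by omega) (by omega)))) hw0
        · exact pow4T hi h12 d1 d2 (hv4' 1 le_rfl (by omega)) (hv4' 2 (by omega) (by omega))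
            hw4 3 2
        · have h := (krelTT hi h12 (konr _) (konr _) d1 d2 (kone w) 1 0 3 2 (t := 0)
            (by norm_num)).commute hi (by norm_num)
          rwa [e1] at h
        · have h := (krelTT hi h12 (konr _) (konr _) d1 d2 (kone w) 0 1 3 2 (t := 0)
            (by norm_num)).commute hi (by norm_num)
          rwa [e2] at h
        · have h1m : v 1 ∈ Algebra.adjoin F ((v '' Set.Icc 1 (2*n+3)) ∪ {w}) :=
            Algebra.subset_adjoin (Or.inl ⟨1, Set.mem_Icc.mpr ⟨le_rfl, by omega⟩, rfl⟩)
          have h2m : v 2 ∈ Algebra.adjoin F ((v '' Set.Icc 1 (2*n+3)) ∪ {w}) :=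
            Algebra.subset_adjoin (Or.inl ⟨2, Set.mem_Icc.mpr ⟨by omega, by omega⟩, rfl⟩)
          have hwm : w ∈ Algebra.adjoin F ((v '' Set.Icc 1 (2*n+3)) ∪ {w}) :=
            Algebra.subset_adjoin (Or.inr rfl)
          exact mul_mem (mul_mem (pow_mem h1m 3) (pow_mem h2m 2)) hwm
        · exact recover hi h12 hc1 hc2 hc1ne hc2ne 1 2 3 2 rfl rfl
        · refine Or.inr fun k hk1 hk2 => ?_
          exact krelTT hi h12 (hvv' 1 (k+2) le_rfl (by omega) (by omega))
            (hvv' 2 (k+2) (by omega) (by omega) (by omega)) d1 d2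
            (hgt (k+2) (by omega) (by omega)) 1 3 3 2 (by norm_num)
      · -- 3 ≤ r : new pattern A with r-2, w' = v1^1 * v2^3 * w
        have d1 : KRel i 1 (v 1) w := hlt 1 le_rfl (by omega)
        have d2 : KRel i 1 (v 2) w := hlt 2 (by omega) (by omega)
        apply assemble hi n v w (v 1 ^ 1 * v 2 ^ 3 * w) hv0' hv4' hvv' ?_ ?_ ?_ ?_ ?_ ?_ ?_ ih
        · exact mul_ne_zero (mul_ne_zero (pow_ne_zero _ (hv0' 1 le_rfl (by omega)))
            (pow_ne_zero _ (hv0' 2 (by omega) (by omega)))) hw0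
        · exact pow4T hi h12 d1 d2 (hv4' 1 le_rfl (by omega)) (hv4' 2 (by omega) (by omega))
            hw4 1 3
        · have h := (krelTT hi h12 (konr _) (konr _) d1 d2 (kone w) 1 0 1 3 (t := 0)
            (by norm_num)).commute hi (by norm_num)
          rwa [e1] at h
        · have h := (krelTT hi h12 (konr _) (konr _) d1 d2 (kone w) 0 1 1 3 (t := 0)
            (by norm_num)).commute hi (by norm_num)
          rwa [e2] at h
        · have h1m : v 1 ∈ Algebra.adjoin F ((v '' Set.Icc 1 (2*n+3)) ∪ {w}) :=
            Algebra.subset_adjoin (Or.inl ⟨1, Set.mem_Icc.mpr ⟨le_rfl, by omega⟩, rfl⟩)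
          have h2m : v 2 ∈ Algebra.adjoin F ((v '' Set.Icc 1 (2*n+3)) ∪ {w}) :=
            Algebra.subset_adjoin (Or.inl ⟨2, Set.mem_Icc.mpr ⟨by omega, by omega⟩, rfl⟩)
          have hwm : w ∈ Algebra.adjoin F ((v '' Set.Icc 1 (2*n+3)) ∪ {w}) :=
            Algebra.subset_adjoin (Or.inr rfl)
          exact mul_mem (mul_mem (pow_mem h1m 1) (pow_mem h2m 3)) hwm
        · exact recover hi h12 hc1 hc2 hc1ne hc2ne 3 1 1 3 rfl rfl
        · refine Or.inl ⟨r - 2, by omega, by omega, ?_, ?_, ?_, ?_⟩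
          · obtain ⟨t, ht⟩ := hodd
            exact ⟨t - 1, by omega⟩
          · intro k hk1 hk2
            exact krelTT hi h12 (hvv' 1 (k+2) le_rfl (by omega) (by omega))
              (hvv' 2 (k+2) (by omega) (by omega) (by omega)) d1 d2
              (hlt (k+2) (by omega) (by omega)) 1 3 1 3 (by norm_num)
          · have hreq' : KRel i 2 (v (r-2+2)) w := by
              rw [show r-2+2 = r by omega]; exact hreq
            exact krelTT hi h12 (hvv' 1 (r-2+2) le_rfl (by omega) (by omega))
              (hvv' 2 (r-2+2) (by omega) (by omega) (by omega)) d1 d2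
              hreq' 1 3 1 3 (by norm_num)
          · intro k hk1 hk2
            exact krelTT hi h12 (hvv' 1 (k+2) le_rfl (by omega) (by omega))
              (hvv' 2 (k+2) (by omega) (by omega) (by omega)) d1 d2
              (hgt (k+2) (by omega) (by omega)) 1 3 1 3 (by norm_num)
    · -- pattern B : w' = v1^2 * v2^2 * w
      have d1 : KRel i 2 (v 1) w := hB 1 le_rfl (by omega)
      have d2 : KRel i 2 (v 2) w := hB 2 (by omega) (by omega)
      apply assemble hi n v w (v 1 ^ 2 * v 2 ^ 2 * w) hv0' hv4' hvv' ?_ ?_ ?_ ?_ ?_ ?_ ?_ ih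
      · exact mul_ne_zero (mul_ne_zero (pow_ne_zero _ (hv0' 1 le_rfl (by omega)))
          (pow_ne_zero _ (hv0' 2 (by omega) (by omega)))) hw0
      · exact pow4T hi h12 d1 d2 (hv4' 1 le_rfl (by omega)) (hv4' 2 (by omega) (by omega))
          hw4 2 2
      · have h := (krelTT hi h12 (konr _) (konr _) d1 d2 (kone w) 1 0 2 2 (t := 0)
          (by norm_num)).commute hi (by norm_num)
        rwa [e1] at h
      · have h := (krelTT hi h12 (konr _) (konr _) d1 d2 (kone w) 0 1 2 2 (t := 0)
          (by norm_num)).commute hi (by norm_num)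
        rwa [e2] at h
      · have h1m : v 1 ∈ Algebra.adjoin F ((v '' Set.Icc 1 (2*n+3)) ∪ {w}) :=
          Algebra.subset_adjoin (Or.inl ⟨1, Set.mem_Icc.mpr ⟨le_rfl, by omega⟩, rfl⟩)
        have h2m : v 2 ∈ Algebra.adjoin F ((v '' Set.Icc 1 (2*n+3)) ∪ {w}) :=
          Algebra.subset_adjoin (Or.inl ⟨2, Set.mem_Icc.mpr ⟨by omega, by omega⟩, rfl⟩)
        have hwm : w ∈ Algebra.adjoin F ((v '' Set.Icc 1 (2*n+3)) ∪ {w}) :=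
          Algebra.subset_adjoin (Or.inr rfl)
        exact mul_mem (mul_mem (pow_mem h1m 2) (pow_mem h2m 2)) hwm
      · exact recover hi h12 hc1 hc2 hc1ne hc2ne 2 2 2 2 rfl rfl
      · refine Or.inr fun k hk1 hk2 => ?_
        exact krelTT hi h12 (hvv' 1 (k+2) le_rfl (by omega) (by omega))
          (hvv' 2 (k+2) (by omega) (by omega) (by omega)) d1 d2
          (hB (k+2) (by omega) (by omega)) 1 3 2 2 (by norm_num)

end final

/-- Given nonzero Kummer elements `v₁, …, v_{2n+1}, w` (fourth powers in `F·1`)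
with `vₖ vⱼ = i · vⱼ vₖ` for `k < j`, and an odd `r` with `1 ≤ r ≤ 2n+1` such that
`vₖ w = i · w vₖ` for `k < r`, `v_r w = -w v_r`, and `w vₖ = i · vₖ w` for `k > r`,
the `F`-subalgebra generated by these elements equals the subalgebra generated by
elements `μ₁, η₁, …, μ_{n+1}, η_{n+1}` forming a tensor product of `n` cyclic algebras
of degree 4 and one quaternion algebra: `μⱼ ηⱼ = i · ηⱼ μⱼ` for `j ≤ n`,
`μ_{n+1} η_{n+1} = -η_{n+1} μ_{n+1}`, all other pairs commute, and all fourth powers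
lie in `F·1`. -/
theorem statement13 {F A : Type*} [Field F] [CharZero F] [DivisionRing A] [Algebra F A]
    (i : F) (hi : i ^ 2 = -1) (n : ℕ) (v : ℕ → A) (w : A)
    (hv0 : ∀ k, 1 ≤ k → k ≤ 2 * n + 1 → v k ≠ 0) (hw0 : w ≠ 0)
    (hv4 : ∀ k, 1 ≤ k → k ≤ 2 * n + 1 → (v k) ^ 4 ∈ Set.range (algebraMap F A))
    (hw4 : w ^ 4 ∈ Set.range (algebraMap F A))
    (hvv : ∀ k j, 1 ≤ k → k < j → j ≤ 2 * n + 1 → v k * v j = i • (v j * v k))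
    (r : ℕ) (hr1 : 1 ≤ r) (hr2 : r ≤ 2 * n + 1) (hodd : Odd r)
    (hlt : ∀ k, 1 ≤ k → k < r → v k * w = i • (w * v k))
    (hreq : v r * w = -(w * v r))
    (hgt : ∀ k, r < k → k ≤ 2 * n + 1 → w * v k = i • (v k * w)) :
    ∃ μ η : ℕ → A,
      (∀ j, 1 ≤ j → j ≤ n + 1 → μ j ≠ 0 ∧ η j ≠ 0) ∧
      Algebra.adjoin F ((v '' Set.Icc 1 (2 * n + 1)) ∪ {w}) =
        Algebra.adjoin F ((μ '' Set.Icc 1 (n + 1)) ∪ (η '' Set.Icc 1 (n + 1))) ∧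
      (∀ j, 1 ≤ j → j ≤ n → μ j * η j = i • (η j * μ j)) ∧
      (μ (n + 1) * η (n + 1) = -(η (n + 1) * μ (n + 1))) ∧
      (∀ j k, 1 ≤ j → j ≤ n + 1 → 1 ≤ k → k ≤ n + 1 → j ≠ k →
        Commute (μ j) (μ k) ∧ Commute (μ j) (η k) ∧ Commute (η j) (η k)) ∧
      (∀ j, 1 ≤ j → j ≤ n + 1 →
        (μ j) ^ 4 ∈ Set.range (algebraMap F A) ∧ (η j) ^ 4 ∈ Set.range (algebraMap F A)) := by
  exact aux i hi n v w hv0 hw0 hv4 hw4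
    (fun k j h1 h2 h3 => krel_one_iff.mpr (hvv k j h1 h2 h3))
    (Or.inl ⟨r, hr1, hr2, hodd,
      fun k h1 h2 => krel_one_iff.mpr (hlt k h1 h2),
      (krel_two_iff hi).mpr hreq,
      fun k h1 h2 => ((krel_one_iff.mpr (hgt k h1 h2)).symm hi).cast hi (by decide)⟩)
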